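/- For fixed z with |z| > 1, lim_{N→∞} Γ(N, N|z|²)/Γ(N) = 0, i.e. lim_{N→∞} e^{-N|z|²} Σ_{k=0}^{N-1} (N|z|²)^k/k! = 0. -/

import Mathlib

open Filter

lemma factorial_le_aux : ∀ m k : ℕ, k ≤ m → Nat.factorial m ≤ Nat.factorial k * (m + 1) ^ (m - k) := by
  intro m
  induction m with
  | zero => intro k hk; interval_cases k; simp
  | succ m ih =>
    intro k hk
    rcases Nat.eq_or_lt_of_le hk with h | h
    · subst h; simp
    · have hk' : k ≤ m := Nat.lt_succ_iff.mp h
      have e1 : m + 1 - k = m - k + 1 := by omega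
      calc Nat.factorial (m + 1) = (m + 1) * Nat.factorial m := rfl
        _ ≤ (m + 1) * (Nat.factorial k * (m + 1) ^ (m - k)) :=
            Nat.mul_le_mul_left _ (ih k hk')
        _ ≤ (m + 2) * (Nat.factorial k * (m + 2) ^ (m - k)) :=
            Nat.mul_le_mul (by omega)
              (Nat.mul_le_mul_left _ (Nat.pow_le_pow_left (by omega) _))
        _ = Nat.factorial k * (m + 2) ^ (m - k + 1) := by ring
        _ = Nat.factorial k * (m + 1 + 1) ^ (m + 1 - k) := by rw [e1]

lemma term_le_aux {x : ℝ} {m k : ℕ} (hk : k ≤ m) (hx : (m : ℝ) + 1 ≤ x) :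
    x ^ k / (Nat.factorial k : ℝ) ≤ x ^ m / (Nat.factorial m : ℝ) := by
  have hx0 : (0 : ℝ) ≤ x := le_trans (by positivity) hx
  rw [div_le_div_iff₀ (by positivity) (by positivity)]
  have h1 : (Nat.factorial m : ℝ) ≤ (Nat.factorial k : ℝ) * x ^ (m - k) := by
    calc (Nat.factorial m : ℝ)
        ≤ ((Nat.factorial k * (m + 1) ^ (m - k) : ℕ) : ℝ) := by
          exact_mod_cast factorial_le_aux m k hk
      _ = (Nat.factorial k : ℝ) * ((m : ℝ) + 1) ^ (m - k) := by push_cast; ring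
      _ ≤ (Nat.factorial k : ℝ) * x ^ (m - k) := by
          gcongr
  have e2 : k + (m - k) = m := by omega
  calc x ^ k * (Nat.factorial m : ℝ)
      ≤ x ^ k * ((Nat.factorial k : ℝ) * x ^ (m - k)) := by gcongr
    _ = x ^ (k + (m - k)) * (Nat.factorial k : ℝ) := by rw [pow_add]; ring
    _ = x ^ m * (Nat.factorial k : ℝ) := by rw [e2]

theorem incGamma_ratio_tendsto_zero (z : ℂ) (hz : 1 < ‖z‖) :
    Tendsto (fun N : ℕ =>
        Real.exp (-(N * ‖z‖ ^ 2)) *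
          ∑ k ∈ Finset.range N, (N * ‖z‖ ^ 2) ^ k / (Nat.factorial k))
      atTop (nhds 0) := by
  set a : ℝ := ‖z‖ ^ 2 with ha
  have ha1 : 1 < a := by nlinarith [norm_nonneg z]
  have ha0 : 0 < a := by linarith
  set r : ℝ := a * Real.exp (1 - a) with hr
  have hr0 : 0 < r := by positivity
  have hr1 : r < 1 := by
    have h := Real.add_one_lt_exp (x := a - 1) (by intro h; linarith [sub_eq_zero.mp h])
    rw [show a - 1 + 1 = a by ring] at h
    have hmul : Real.exp (1 - a) * Real.exp (a - 1) = 1 := by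
      rw [← Real.exp_add, show 1 - a + (a - 1) = 0 by ring, Real.exp_zero]
    have he : 0 < Real.exp (1 - a) := Real.exp_pos _
    rw [hr]
    nlinarith
  have hbound : ∀ N : ℕ, 1 ≤ N →
      Real.exp (-(N * a)) * ∑ k ∈ Finset.range N, (N * a) ^ k / (Nat.factorial k : ℝ)
        ≤ (N : ℝ) / a * r ^ N := by
    intro N hN
    obtain ⟨m, rfl⟩ : ∃ m, N = m + 1 := ⟨N - 1, by omega⟩
    set x : ℝ := ((m + 1 : ℕ) : ℝ) * a with hxdef
    have hN1 : (1 : ℝ) ≤ ((m + 1 : ℕ) : ℝ) := by exact_mod_cast hN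
    have hNx : (m : ℝ) + 1 ≤ x := by
      rw [hxdef]
      push_cast
      nlinarith
    have hx0 : (0 : ℝ) ≤ x := le_trans (by positivity) hNx
    have hsum : ∑ k ∈ Finset.range (m + 1), x ^ k / (Nat.factorial k : ℝ)
        ≤ ((m + 1 : ℕ) : ℝ) * (x ^ m / (Nat.factorial m : ℝ)) := by
      calc ∑ k ∈ Finset.range (m + 1), x ^ k / (Nat.factorial k : ℝ)
          ≤ ∑ _k ∈ Finset.range (m + 1), x ^ m / (Nat.factorial m : ℝ) :=
            Finset.sum_le_sum fun k hk =>
              term_le_aux (Nat.lt_succ_iff.mp (Finset.mem_range.mp hk)) hNx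
        _ = ((m + 1 : ℕ) : ℝ) * (x ^ m / (Nat.factorial m : ℝ)) := by
            rw [Finset.sum_const, Finset.card_range, nsmul_eq_mul]
    have hstir : ((m : ℝ) + 1) ^ m / (Nat.factorial m : ℝ) ≤ Real.exp ((m : ℝ) + 1) := by
      have := Real.pow_div_factorial_le_exp (x := (m : ℝ) + 1) (by positivity) m
      simpa using this
    have key : x ^ m / (Nat.factorial m : ℝ) ≤ a ^ m * Real.exp ((m : ℝ) + 1) := by
      have hxeq : x = ((m : ℝ) + 1) * a := by rw [hxdef]; push_cast; ring
      rw [hxeq, mul_pow, mul_comm (((m : ℝ) + 1) ^ m), mul_div_assoc]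
      gcongr
    have hcast : ((m + 1 : ℕ) : ℝ) = (m : ℝ) + 1 := by push_cast; ring
    calc Real.exp (-(((m + 1 : ℕ) : ℝ) * a)) *
          ∑ k ∈ Finset.range (m + 1), x ^ k / (Nat.factorial k : ℝ)
        ≤ Real.exp (-(((m + 1 : ℕ) : ℝ) * a)) *
            (((m + 1 : ℕ) : ℝ) * (a ^ m * Real.exp ((m : ℝ) + 1))) := by
          gcongr
          exact le_trans hsum (by gcongr)
      _ = ((m + 1 : ℕ) : ℝ) / a * (a ^ (m + 1) *
            Real.exp (((m : ℝ) + 1) * (1 - a))) := by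
          rw [hcast, mul_sub, mul_one, Real.exp_sub, Real.exp_neg, pow_succ]
          field_simp
      _ = ((m + 1 : ℕ) : ℝ) / a * r ^ (m + 1) := by
          rw [hr, mul_pow, ← Real.exp_nat_mul]
          push_cast
          ring_nf
  have hzero : Tendsto (fun N : ℕ => (N : ℝ) / a * r ^ N) atTop (nhds 0) := by
    have h := tendsto_pow_const_mul_const_pow_of_lt_one 1 hr0.le hr1
    have h2 := h.div_const a
    simp only [pow_one, zero_div] at h2
    convert h2 using 2 with N
    ring
  refine tendsto_of_tendsto_of_tendsto_of_le_of_le' tendsto_const_nhds hzero ?_ ?_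
  · filter_upwards with N
    positivity
  · filter_upwards [eventually_ge_atTop 1] with N hN
    exact hbound N hN
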